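/- Assume the family of densities {f_h : h ∈ {0,1}^K} is non-redundant, and suppose that each of the functions a_i and b_{L,i} (i = 1,…,K, L = 0,…,K−1) is, on Q, a finite linear combination with real coefficients of the densities f_h. Let D : Q → [0,1]^K with 0 ≤ D_K(u) ≤ … ≤ D_1(u) ≤ 1, together with multipliers μ_L ≥ 0 (L = 0,…,K−1) and measurable λ_j : Q → [0,∞) (j = 1,…,K+1), satisfy the stationarity and complementary-slackness optimality conditions at almost every u ∈ Q. If in addition, for every pair 1 ≤ l < j ≤ K+1, the function Σ_{i=l}^{j−1} ( a_i − Σ_{L=0}^{K−1} μ_L b_{L,i} ) is a non-trivial linear combination of the densities f_h, then D(u) ∈ {0,1}^K for almost every u ∈ Q. -/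

import Mathlib

open MeasureTheory Finset

noncomputable section

/-- The unit cube `[0,1]^K`. -/
def unitCube (K : ℕ) : Set (Fin K → ℝ) := Set.Icc 0 1

/-- The "lower corner" set `Q = {u ∈ [0,1]^K : u 1 ≤ u 2 ≤ … ≤ u K}`. -/
def QSet (K : ℕ) : Set (Fin K → ℝ) :=
  {u | Monotone u ∧ ∀ i, 0 ≤ u i ∧ u i ≤ 1}

/-- Non-redundancy of the family of densities: every non-trivial linear combination
is non-zero almost everywhere on `[0,1]^K`. -/
def NonRedundant (K : ℕ) (f : (Fin K → Bool) → (Fin K → ℝ) → ℝ) : Prop :=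
  ∀ γ : (Fin K → Bool) → ℝ, (∃ h, γ h ≠ 0) →
    ∀ᵐ u ∂(volume.restrict (unitCube K)), (∑ h : Fin K → Bool, γ h * f h u) ≠ 0

lemma tele_sum (G : ℕ → ℝ) (l : ℕ) : ∀ j, l ≤ j →
    ∑ n ∈ Finset.Ico l j, (G n - G (n+1)) = G l - G j := by
  intro j hj
  induction j, hj using Nat.le_induction with
  | base => simp
  | succ j hj ih => rw [Finset.sum_Ico_succ_top hj, ih]; ring

lemma measurableSet_QSet (K : ℕ) : MeasurableSet (QSet K) := by
  have he : QSet K =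
      (⋂ (i : Fin K) (j : Fin K) (_ : i ≤ j), {u : Fin K → ℝ | u i ≤ u j}) ∩
        (⋂ i : Fin K, ({u : Fin K → ℝ | 0 ≤ u i} ∩ {u : Fin K → ℝ | u i ≤ 1})) := by
    ext u
    simp only [QSet, Set.mem_setOf_eq, Set.mem_inter_iff, Set.mem_iInter, Monotone]
  rw [he]
  exact (MeasurableSet.iInter fun i => .iInter fun j => .iInter fun _ =>
      measurableSet_le (measurable_pi_apply i) (measurable_pi_apply j)).inter
    (MeasurableSet.iInter fun i =>
      (measurableSet_le measurable_const (measurable_pi_apply i)).inter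
      (measurableSet_le (measurable_pi_apply i) measurable_const))

/-- Under non-redundancy of the densities, if the objective and constraint
coefficient functions are linear combinations of the densities on `Q`, a feasible `D`
satisfying the Euler–Lagrange stationarity and complementary-slackness conditions, such
that all the relevant partial sums `Σ_{i=l}^{j-1}(a_i - Σ_L μ_L b_{L,i})` are non-trivial
linear combinations of the densities, must be integer (0/1-valued) almost everywhere. -/
theorem EL_solution_is_integer
    (K : ℕ) (hK : 0 < K)
    (f : (Fin K → Bool) → (Fin K → ℝ) → ℝ)
    (hfred : NonRedundant K f)
    (a : Fin K → (Fin K → ℝ) → ℝ) (b : Fin K → Fin K → (Fin K → ℝ) → ℝ)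
    (ha : ∀ i, ∃ c : (Fin K → Bool) → ℝ, ∀ u ∈ QSet K, a i u = ∑ h, c h * f h u)
    (hb : ∀ L i, ∃ c : (Fin K → Bool) → ℝ, ∀ u ∈ QSet K, b L i u = ∑ h, c h * f h u)
    (α : ℝ)
    (D : (Fin K → ℝ) → Fin K → ℝ)
    (hD : ∀ u ∈ QSet K, (∀ i, 0 ≤ D u i ∧ D u i ≤ 1) ∧
      ∀ i j : Fin K, i ≤ j → D u j ≤ D u i)
    (μ : Fin K → ℝ) (hμ : ∀ L, 0 ≤ μ L)
    (lam : Fin (K + 1) → (Fin K → ℝ) → ℝ)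
    (hlam : ∀ j u, 0 ≤ lam j u) (hlamMeas : ∀ j, Measurable (lam j))
    -- stationarity, a.e. on Q
    (hstat : ∀ᵐ u ∂(volume.restrict (QSet K)), ∀ i : Fin K,
      a i u - (∑ L, μ L * b L i u) - lam i.castSucc u + lam i.succ u = 0)
    -- complementary slackness for the integral constraints
    (hCS1 : ∀ L, μ L * ((∫ u in QSet K, ∑ i, b L i u * D u i) - α) = 0)
    -- pointwise complementary slackness, a.e. on Q
    (hCS2 : ∀ᵐ u ∂(volume.restrict (QSet K)),
      lam (Fin.last K) u * D u ⟨K - 1, by omega⟩ = 0)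
    (hCS3 : ∀ᵐ u ∂(volume.restrict (QSet K)), ∀ (i : Fin K) (hi : (i : ℕ) + 1 < K),
      lam ⟨(i : ℕ) + 1, by omega⟩ u * (D u i - D u ⟨(i : ℕ) + 1, hi⟩) = 0)
    (hCS4 : ∀ᵐ u ∂(volume.restrict (QSet K)), lam 0 u * (D u ⟨0, hK⟩ - 1) = 0)
    -- each partial sum of reduced costs is a non-trivial linear combination of densities
    (hnontriv : ∀ l j : ℕ, l < j → j ≤ K →
      ∃ γ : (Fin K → Bool) → ℝ, (∃ h, γ h ≠ 0) ∧
        ∀ u ∈ QSet K,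
          (∑ i : Fin K, if l ≤ (i : ℕ) ∧ (i : ℕ) < j
            then a i u - ∑ L, μ L * b L i u else 0) = ∑ h, γ h * f h u) :
    ∀ᵐ u ∂(volume.restrict (QSet K)), ∀ i, D u i = 0 ∨ D u i = 1 := by
  classical
  have hQsub : QSet K ⊆ unitCube K := by
    intro u hu
    exact ⟨fun i => (hu.2 i).1, fun i => (hu.2 i).2⟩
  choose γ hγne hγeq using hnontriv
  have hae : ∀ᵐ u ∂(volume.restrict (QSet K)), ∀ l j : ℕ,
      ∀ (h1 : l < j) (h2 : j ≤ K), (∑ h, γ l j h1 h2 h * f h u) ≠ 0 := by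
    rw [ae_all_iff]; intro l
    rw [ae_all_iff]; intro j
    by_cases h1 : l < j
    · by_cases h2 : j ≤ K
      · have h3 := ae_restrict_of_ae_restrict_of_subset hQsub
          (hfred (γ l j h1 h2) (hγne l j h1 h2))
        filter_upwards [h3] with u hu h1' h2'
        exact hu
      · filter_upwards with u h1' h2'; exact absurd h2' h2
    · filter_upwards with u h1'; exact absurd h1' h1
  filter_upwards [hstat, hCS2, hCS3, hCS4, hae,
    ae_restrict_mem (measurableSet_QSet K)] with u hustat hucs2 hucs3 hucs4 huae hu
  intro i
  by_contra hcon
  push_neg at hcon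
  obtain ⟨h0, h1⟩ := hcon
  obtain ⟨hbd, hmonoD⟩ := hD u hu
  set v := D u i with hv
  have hv0 : 0 < v := lt_of_le_of_ne (hbd i).1 (Ne.symm h0)
  have hv1 : v < 1 := lt_of_le_of_ne (hbd i).2 h1
  set D' : ℕ → ℝ := fun n => if h : n < K then D u ⟨n, h⟩ else 0 with hD'
  have hmono : ∀ {n m : ℕ}, n ≤ m → (hm : m < K) → D' m ≤ D' n := by
    intro n m hnm hm
    have hn : n < K := lt_of_le_of_lt hnm hm
    simp only [hD', dif_pos hm, dif_pos hn]
    exact hmonoD ⟨n, hn⟩ ⟨m, hm⟩ hnm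
  have hP : ∃ n, n < K ∧ D' n = v := by
    refine ⟨(i : ℕ), i.isLt, ?_⟩
    simp [hD', i.isLt, hv]
  set l := Nat.find hP with hl
  obtain ⟨hlK, hlv⟩ : l < K ∧ D' l = v := Nat.find_spec hP
  set m := Nat.findGreatest (fun n => n < K ∧ D' n = v) (K - 1) with hm
  have hiK1 : (i : ℕ) ≤ K - 1 := by omega
  have hPi : (i : ℕ) < K ∧ D' (i : ℕ) = v := ⟨i.isLt, by simp [hD', i.isLt, hv]⟩
  obtain ⟨hmK, hmv⟩ : m < K ∧ D' m = v := by
    have := Nat.findGreatest_spec (P := fun n => n < K ∧ D' n = v) hiK1 hPi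
    rw [← hm] at this; exact this
  have hlm : l ≤ m := by
    have := Nat.le_findGreatest (P := fun n => n < K ∧ D' n = v) hiK1 hPi
    rw [← hm] at this
    exact le_trans (Nat.find_min' hP hPi) this
  set j := m + 1 with hj
  have hlj : l < j := by omega
  have hjK : j ≤ K := hmK
  -- G n = lam ⟨n,_⟩ u
  set G : ℕ → ℝ := fun n => if h : n ≤ K then lam ⟨n, Nat.lt_succ_of_le h⟩ u else 0 with hG
  -- λ_l u = 0
  have hGl : G l = 0 := by
    rcases Nat.eq_zero_or_pos l with hl0 | hlpos
    · have hne : D u ⟨0, hK⟩ - 1 ≠ 0 := by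
        have : D u ⟨0, hK⟩ = v := by
          rw [← hlv, hl0]; simp [hD', hK]
        rw [this]; intro hc; linarith
      have := mul_eq_zero.mp hucs4
      have hlam0 : lam 0 u = 0 := this.resolve_right hne
      simp only [hG, dif_pos (le_of_lt hlK)]
      rw [show (⟨l, Nat.lt_succ_of_le (le_of_lt hlK)⟩ : Fin (K+1)) = 0 by
        exact Fin.ext (by simp [hl0])]
      exact hlam0
    · obtain ⟨n, hln⟩ : ∃ n, l = n + 1 := ⟨l - 1, by omega⟩
      have hnK : n < K := by omega
      have hn1K : n + 1 < K := by omega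
      have hnv : D' n ≠ v := fun hc =>
        Nat.find_min hP (show n < Nat.find hP by omega) ⟨hnK, hc⟩
      have hl1v : D' (n + 1) = v := by rw [← hln]; exact hlv
      have hgt : D' (n + 1) < D' n := lt_of_le_of_ne (hmono (by omega) hn1K)
        (by rw [hl1v]; exact fun hc => hnv hc.symm)
      have hcs := hucs3 ⟨n, hnK⟩ hn1K
      have hne : D u ⟨n, hnK⟩ - D u ⟨n + 1, hn1K⟩ ≠ 0 := by
        have e1 : D' n = D u ⟨n, hnK⟩ := by simp [hD', hnK]
        have e2 : D' (n+1) = D u ⟨n+1, hn1K⟩ := by simp [hD', hn1K]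
        intro hc; rw [← e1, ← e2] at hc; linarith
      have hz := (mul_eq_zero.mp hcs).resolve_right hne
      simp only [hG, dif_pos (le_of_lt hlK)]
      rw [show (⟨l, Nat.lt_succ_of_le (le_of_lt hlK)⟩ : Fin (K+1))
        = ⟨n + 1, by omega⟩ from Fin.ext hln]
      exact hz
  -- λ_j u = 0
  have hGj : G j = 0 := by
    rcases eq_or_lt_of_le hjK with hjk | hjlt
    · -- j = K
      have hKm : K - 1 = m := by omega
      have hpos : D u ⟨K - 1, by omega⟩ ≠ 0 := by
        have hfe : (⟨K - 1, by omega⟩ : Fin K) = ⟨m, hmK⟩ := Fin.ext hKm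
        have hmv' : D u ⟨m, hmK⟩ = v := by
          have := hmv; simp only [hD', dif_pos hmK] at this; exact this
        rw [hfe, hmv']; exact ne_of_gt hv0
      have hlamK : lam (Fin.last K) u = 0 := (mul_eq_zero.mp hucs2).resolve_right hpos
      simp only [hG, dif_pos hjK]
      rw [show (⟨j, Nat.lt_succ_of_le hjK⟩ : Fin (K+1)) = Fin.last K from Fin.ext (by simp [hjk])]
      exact hlamK
    · -- j < K
      have hm1K : m + 1 < K := by omega
      have hgr := Nat.findGreatest_is_greatest (P := fun n => n < K ∧ D' n = v)
        (n := K - 1) (k := m + 1) (by rw [← hm]; exact Nat.lt_succ_self m) (by omega)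
      have hnv : D' (m + 1) ≠ v := fun hc => hgr ⟨hm1K, hc⟩
      have hgt : D' (m + 1) < D' m := lt_of_le_of_ne (hmono (by omega) hm1K)
        (by rw [hmv]; exact hnv)
      have hcs := hucs3 ⟨m, hmK⟩ hm1K
      have hne : D u ⟨m, hmK⟩ - D u ⟨m + 1, hm1K⟩ ≠ 0 := by
        have e1 : D' m = D u ⟨m, hmK⟩ := by simp [hD', hmK]
        have e2 : D' (m+1) = D u ⟨m+1, hm1K⟩ := by simp [hD', hm1K]
        intro hc; rw [← e1, ← e2] at hc; linarith
      have hz := (mul_eq_zero.mp hcs).resolve_right hne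
      simp only [hG, dif_pos hjK]
      exact hz
  -- telescoping
  have key : (∑ i : Fin K, if l ≤ (i : ℕ) ∧ (i : ℕ) < j
      then a i u - ∑ L, μ L * b L i u else 0) = G l - G j := by
    have h1 : ∀ k : Fin K, (if l ≤ (k : ℕ) ∧ (k : ℕ) < j
        then a k u - ∑ L, μ L * b L k u else 0)
        = (fun n => if l ≤ n ∧ n < j then G n - G (n+1) else 0) (k : ℕ) := by
      intro k
      by_cases hc : l ≤ (k : ℕ) ∧ (k : ℕ) < j
      · simp only [hc, if_true, and_self]
        have hs := hustat k
        have hG1 : G (k : ℕ) = lam k.castSucc u := by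
          simp only [hG]
          rw [dif_pos (le_of_lt k.isLt)]
          exact congrArg (fun x => lam x u) (Fin.ext rfl)
        have hG2 : G ((k : ℕ) + 1) = lam k.succ u := by
          simp only [hG]
          rw [dif_pos (show (k : ℕ) + 1 ≤ K from k.isLt)]
          exact congrArg (fun x => lam x u) (Fin.ext rfl)
        rw [hG1, hG2]; linarith
      · simp [hc]
    rw [Finset.sum_congr rfl (fun k _ => h1 k),
      Fin.sum_univ_eq_sum_range (fun n => if l ≤ n ∧ n < j then G n - G (n+1) else 0) K,
      ← Finset.sum_filter]
    have hfil : (Finset.range K).filter (fun n => l ≤ n ∧ n < j) = Finset.Ico l j := by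
      ext n; simp only [Finset.mem_filter, Finset.mem_range, Finset.mem_Ico]; omega
    rw [hfil, tele_sum G l j (le_of_lt hlj)]
  have hsum := hγeq l j hlj hjK u hu
  rw [key, hGl, hGj] at hsum
  exact huae l j hlj hjK (by linarith)


end
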